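/- Let n, m ∈ ℕ, let τ ∈ [0,1] and t_k ∈ ℝ, and let x : ℝ → ℝ be (n+m+1)-times continuously differentiable on a neighbourhood of t_k. Then the defect of the Hermite–Obreschkoff formula, D(h) := Σ_{j=0}^{n} A_{n−j}^{m} ((τh)^j / j!) x^{(j)}(t_k) − Σ_{j=0}^{m} A_{n}^{m−j} ((−τh)^j / j!) x^{(j)}(t_k + τh), satisfies D(h) = O(h^{n+m+1}) as h → 0. -/

import Mathlib

open Finset Filter Asymptotics


lemma choose_symm_add (n m : ℕ) : ((n+m).choose n : ℤ) = ((n+m).choose m : ℤ) := by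
  rw [show ((n+m).choose m) = ((n+m).choose (n+m-n)) by congr 1; omega,
    Nat.choose_symm (by omega)]

lemma combo : ∀ (p : ℕ), ∀ (m n : ℕ), p ≤ n + m →
    ∑ j ∈ range (p+1), (-1:ℤ)^j * (p.choose j) * ((n+m-j).choose n) = ((n+m-p).choose m) := by
  intro p
  induction p with
  | zero =>
    intro m n _
    simpa using choose_symm_add n m
  | succ p ih =>
    intro m n hp
    rw [Finset.sum_range_succ' _ (p+1)]
    simp only [pow_succ, pow_zero, Nat.choose_zero_right, Nat.sub_zero, Nat.cast_one, one_mul]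
    have step : ∀ j ∈ range (p+1),
        (-1:ℤ)^j * (-1) * ((p+1).choose (j+1)) * ((n+m-(j+1)).choose n)
        = -((-1:ℤ)^j * (p.choose j) * ((n+m-1-j).choose n))
          + ((-1:ℤ)^(j+1) * (p.choose (j+1)) * ((n+m-(j+1)).choose n)) := by
      intro j hj
      have h1 : (p+1).choose (j+1) = p.choose j + p.choose (j+1) := Nat.choose_succ_succ p j
      have h2 : n + m - (j+1) = n + m - 1 - j := by omega
      rw [h1, h2, pow_succ]
      push_cast
      ring
    rw [Finset.sum_congr rfl step, Finset.sum_add_distrib]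
    have shift : ∑ j ∈ range (p+1), ((-1:ℤ)^(j+1) * (p.choose (j+1)) * ((n+m-(j+1)).choose n))
        = ∑ j ∈ range (p+2), ((-1:ℤ)^j * (p.choose j) * ((n+m-j).choose n)) - ((n+m).choose n) := by
      rw [Finset.sum_range_succ' (fun j => (-1:ℤ)^j * (p.choose j) * ((n+m-j).choose n)) (p+1)]
      simp
    have expand : ∑ j ∈ range (p+2), ((-1:ℤ)^j * (p.choose j) * ((n+m-j).choose n))
        = ∑ j ∈ range (p+1), ((-1:ℤ)^j * (p.choose j) * ((n+m-j).choose n)) := by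
      rw [Finset.sum_range_succ, Nat.choose_succ_self]
      simp
    rw [shift, expand, ih m n (by omega), Finset.sum_neg_distrib]
    -- goal: -∑ ... (with m-1 style) + (C(n+m-p,m) - C(n+m,n)) + C(n+m,n) = C(n+m-(p+1), m)
    rcases Nat.eq_zero_or_pos m with hm | hm
    · subst hm
      have hz : ∀ j ∈ range (p+1), (-1:ℤ)^j * (p.choose j) * ((n+0-1-j).choose n) = 0 := by
        intro j hj
        have : (n+0-1-j).choose n = 0 := Nat.choose_eq_zero_of_lt (by omega)
        rw [this]; simp
      rw [Finset.sum_congr rfl hz]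
      simp only [Finset.sum_const_zero, neg_zero]
      have e1 : (n+0-p).choose 0 = 1 := Nat.choose_zero_right _
      have e2 : (n+0-(p+1)).choose 0 = 1 := Nat.choose_zero_right _
      rw [e1, e2]; ring
    · obtain ⟨m', rfl⟩ : ∃ m', m = m' + 1 := ⟨m-1, by omega⟩
      have hrw : ∀ j ∈ range (p+1),
          (-1:ℤ)^j * (p.choose j) * ((n+(m'+1)-1-j).choose n)
          = (-1:ℤ)^j * (p.choose j) * ((n+m'-j).choose n) := by
        intro j hj
        have h : n+(m'+1)-1-j = n+m'-j := by omega
        rw [h]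
      rw [Finset.sum_congr rfl hrw, ih m' n (by omega)]
      have pascal : ((n+(m'+1)-p).choose (m'+1) : ℤ)
          = ((n+m'-p).choose m') + ((n+m'-p).choose (m'+1)) := by
        have : n+(m'+1)-p = (n+m'-p) + 1 := by omega
        rw [this]
        exact_mod_cast congrArg Nat.cast (Nat.choose_succ_succ (n+m'-p) m')
      have hfinal : n+(m'+1)-(p+1) = n+m'-p := by omega
      rw [hfinal]
      push_cast at pascal ⊢
      linarith


lemma taylor_bigO : ∀ (K : ℕ) (g : ℝ → ℝ) (U : Set ℝ), IsOpen U → ∀ a ∈ U,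
    ContDiffOn ℝ ((K+1 : ℕ) : ℕ∞) g U →
    (fun s : ℝ => g (a + s) - ∑ i ∈ range (K+1), iteratedDeriv i g a * s ^ i / (i.factorial : ℝ))
      =O[nhds (0:ℝ)] fun s : ℝ => s ^ (K+1) := by
  intro K
  induction K with
  | zero =>
    intro g U hU a ha hg
    have hd : DifferentiableAt ℝ g a :=
      (hg.contDiffAt (hU.mem_nhds ha)).differentiableAt (by simp)
    have h1 : (fun t => g t - g a) =O[nhds a] (fun t => t - a) :=
      hd.hasFDerivAt.isBigO_sub
    have h2 : Tendsto (fun s : ℝ => a + s) (nhds 0) (nhds a) := by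
      have := (tendsto_const_nhds (x := a) (f := nhds (0:ℝ))).add tendsto_id
      simpa using this
    have h4 : (fun s : ℝ => g (a + s) - g a) =O[nhds 0] (fun s : ℝ => s) := by
      have h3 := h1.comp_tendsto h2
      simpa [Function.comp_def, add_sub_cancel_left] using h3
    simpa [iteratedDeriv_zero] using h4
  | succ K ihK =>
    intro g U hU a ha hg
    have hg' : ContDiffOn ℝ ((K+1 : ℕ) : ℕ∞) (deriv g) U := by
      refine hg.deriv_of_isOpen hU ?_
      exact_mod_cast Nat.le_refl (K+2)
    have hIH := ihK (deriv g) U hU a ha hg'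
    obtain ⟨c, hc0, hc⟩ := hIH.exists_nonneg
    rw [isBigOWith_iff] at hc
    rw [Metric.eventually_nhds_iff] at hc
    obtain ⟨ε, hε, hball⟩ := hc
    obtain ⟨δ, hδ, hδU⟩ := Metric.isOpen_iff.1 hU a ha
    set R' : ℝ → ℝ := fun s =>
      deriv g (a + s) - ∑ i ∈ range (K+1), iteratedDeriv i (deriv g) a * s ^ i / (i.factorial : ℝ)
      with hR'
    set R : ℝ → ℝ := fun s =>
      g (a + s) - ∑ i ∈ range (K+2), iteratedDeriv i g a * s ^ i / (i.factorial : ℝ) with hR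
    have key : ∀ s : ℝ, |s| < min ε δ → ‖R s‖ ≤ c * ‖s ^ (K+2)‖ := by
      intro s hs
      have habs : ∀ u ∈ Set.uIcc (0:ℝ) s, |u| ≤ |s| := by
        intro u hu
        rcases le_total 0 s with h | h
        · rw [Set.uIcc_of_le h] at hu
          rw [abs_of_nonneg hu.1, abs_of_nonneg h]; exact hu.2
        · rw [Set.uIcc_of_ge h] at hu
          rw [abs_of_nonpos hu.2, abs_of_nonpos h]; linarith [hu.1]
      have hmemU : ∀ u ∈ Set.uIcc (0:ℝ) s, a + u ∈ U := by
        intro u hu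
        apply hδU
        rw [Metric.mem_ball]
        have := habs u hu
        have : |u| < δ := lt_of_le_of_lt this (lt_of_lt_of_le hs (min_le_right _ _))
        simpa [Real.dist_eq, abs_sub_comm] using this
      have hderiv : ∀ u ∈ Set.uIcc (0:ℝ) s, HasDerivWithinAt R (R' u) (Set.uIcc (0:ℝ) s) u := by
        intro u hu
        have hdg : HasDerivAt g (deriv g (a+u)) (a+u) := by
          refine (((hg.contDiffAt (hU.mem_nhds (hmemU u hu))).differentiableAt ?_)).hasDerivAt
          simp
        have hcomp : HasDerivAt (fun v : ℝ => g (a + v)) (deriv g (a+u)) u := by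
          have := HasDerivAt.comp u hdg ((hasDerivAt_id u).const_add a)
          simpa [Function.comp_def] using this
        have hpoly : HasDerivAt
            (fun v : ℝ => ∑ i ∈ range (K+2), iteratedDeriv i g a * v ^ i / (i.factorial : ℝ))
            (∑ i ∈ range (K+1), iteratedDeriv i (deriv g) a * u ^ i / (i.factorial : ℝ)) u := by
          have h1 : HasDerivAt
              (fun v : ℝ => ∑ i ∈ range (K+2), iteratedDeriv i g a * v ^ i / (i.factorial : ℝ))
              (∑ i ∈ range (K+2),
                iteratedDeriv i g a * ((i : ℝ) * u ^ (i-1)) / (i.factorial : ℝ)) u :=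
            HasDerivAt.fun_sum fun i _ => ((hasDerivAt_pow i u).const_mul _).div_const _
          have h2 : ∑ i ∈ range (K+2),
                iteratedDeriv i g a * ((i : ℝ) * u ^ (i-1)) / (i.factorial : ℝ)
              = ∑ i ∈ range (K+1), iteratedDeriv i (deriv g) a * u ^ i / (i.factorial : ℝ) := by
            rw [Finset.sum_range_succ']
            simp only [Nat.cast_zero, zero_mul, mul_zero, zero_div, add_zero]
            refine Finset.sum_congr rfl fun i _ => ?_
            rw [← iteratedDeriv_succ']
            have hfac : ((i+1).factorial : ℝ) = ((i:ℝ)+1) * (i.factorial : ℝ) := by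
              exact_mod_cast Nat.factorial_succ i
            have hne : (i.factorial : ℝ) ≠ 0 := Nat.cast_ne_zero.2 (Nat.factorial_ne_zero i)
            have hne1 : ((i:ℝ)+1) ≠ 0 := by positivity
            rw [hfac]
            have : (i + 1 - 1) = i := rfl
            rw [this]
            push_cast
            field_simp
          rwa [h2] at h1
        exact (hcomp.sub hpoly).hasDerivWithinAt
      have hbound : ∀ u ∈ Set.uIcc (0:ℝ) s, ‖R' u‖ ≤ c * |s| ^ (K+1) := by
        intro u hu
        have h1 : dist u 0 < ε := by
          rw [Real.dist_eq, sub_zero]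
          exact lt_of_le_of_lt (habs u hu) (lt_of_lt_of_le hs (min_le_left _ _))
        have h2 := hball h1
        calc ‖R' u‖ ≤ c * ‖u ^ (K+1)‖ := h2
          _ = c * |u| ^ (K+1) := by rw [norm_pow]; rfl
          _ ≤ c * |s| ^ (K+1) :=
            mul_le_mul_of_nonneg_left (pow_le_pow_left₀ (abs_nonneg u) (habs u hu) _) hc0
      have hconv : Convex ℝ (Set.uIcc (0:ℝ) s) := convex_uIcc 0 s
      have hmvt := hconv.norm_image_sub_le_of_norm_hasDerivWithin_le hderiv hbound
        Set.left_mem_uIcc Set.right_mem_uIcc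
      have hR0 : R 0 = 0 := by
        simp only [hR, add_zero]
        rw [Finset.sum_eq_single 0]
        · simp [iteratedDeriv_zero]
        · intro i _ hi
          simp [zero_pow hi]
        · intro h; simp at h
      rw [hR0, sub_zero, sub_zero] at hmvt
      calc ‖R s‖ ≤ c * |s| ^ (K+1) * ‖s‖ := hmvt
        _ = c * ‖s ^ (K+2)‖ := by
          rw [norm_pow]
          show c * |s| ^ (K+1) * |s| = c * |s| ^ (K+2)
          ring
    rw [isBigO_iff]
    refine ⟨c, ?_⟩
    rw [Metric.eventually_nhds_iff]
    refine ⟨min ε δ, lt_min hε hδ, fun s hs => ?_⟩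
    apply key
    simpa [Real.dist_eq] using hs

lemma coef (n m p : ℕ) (hp : p ≤ n + m) :
    ∑ j ∈ range (m+1), (if j ≤ p then
        ((-1:ℝ)^j * ((n+(m-j)).choose n) / ((j.factorial : ℝ) * ((p-j).factorial : ℝ))) else 0)
    = (if p ≤ n then (((n-p)+m).choose (n-p) : ℝ) / (p.factorial : ℝ) else 0) := by
  have hcombo : ∑ j ∈ range (p+1), (-1:ℝ)^j * (p.choose j) * ((n+m-j).choose n)
      = ((n+m-p).choose m : ℝ) := by exact_mod_cast combo p m n hp
  have key : ∑ j ∈ range (m+1), (if j ≤ p then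
        ((-1:ℝ)^j * ((n+(m-j)).choose n) / ((j.factorial : ℝ) * ((p-j).factorial : ℝ))) else 0)
      = (1 / (p.factorial : ℝ)) *
        ∑ j ∈ range (p+1), (-1:ℝ)^j * (p.choose j) * ((n+m-j).choose n) := by
    rw [Finset.mul_sum]
    have hzero : ∀ (N : ℕ), ∀ j ∈ range N, j ∉ range (m+1) → (if j ≤ p ∧ j ≤ m then
        ((-1:ℝ)^j * ((n+m-j).choose n) / ((j.factorial : ℝ) * ((p-j).factorial : ℝ))) else 0)
        = 0 := by
      intro N j _ hj
      have : ¬ j ≤ m := fun h => hj (Finset.mem_range.2 (by omega))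
      exact if_neg (by tauto)
    have hzero' : ∀ j ∈ range (m+p+1), j ∉ range (p+1) → (if j ≤ p ∧ j ≤ m then
        ((-1:ℝ)^j * ((n+m-j).choose n) / ((j.factorial : ℝ) * ((p-j).factorial : ℝ))) else 0)
        = 0 := by
      intro j _ hj
      have : ¬ j ≤ p := fun h => hj (Finset.mem_range.2 (by omega))
      exact if_neg (by tauto)
    calc ∑ j ∈ range (m+1), (if j ≤ p then
          ((-1:ℝ)^j * ((n+(m-j)).choose n) / ((j.factorial : ℝ) * ((p-j).factorial : ℝ))) else 0)
        = ∑ j ∈ range (m+1), (if j ≤ p ∧ j ≤ m then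
          ((-1:ℝ)^j * ((n+m-j).choose n) / ((j.factorial : ℝ) * ((p-j).factorial : ℝ))) else 0) := by
          refine Finset.sum_congr rfl fun j hj => ?_
          have hjm : j ≤ m := Nat.lt_succ_iff.1 (Finset.mem_range.1 hj)
          have e : n + (m - j) = n + m - j := by omega
          rw [e]
          by_cases h : j ≤ p
          · rw [if_pos h, if_pos ⟨h, hjm⟩]
          · rw [if_neg h, if_neg (by tauto)]
      _ = ∑ j ∈ range (m+p+1), (if j ≤ p ∧ j ≤ m then
          ((-1:ℝ)^j * ((n+m-j).choose n) / ((j.factorial : ℝ) * ((p-j).factorial : ℝ))) else 0) :=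
          Finset.sum_subset (Finset.range_subset_range.2 (by omega)) (hzero _)
      _ = ∑ j ∈ range (p+1), (if j ≤ p ∧ j ≤ m then
          ((-1:ℝ)^j * ((n+m-j).choose n) / ((j.factorial : ℝ) * ((p-j).factorial : ℝ))) else 0) :=
          (Finset.sum_subset (Finset.range_subset_range.2 (by omega)) hzero').symm
      _ = ∑ j ∈ range (p+1), (1 / (p.factorial : ℝ)) *
          ((-1:ℝ)^j * (p.choose j) * ((n+m-j).choose n)) := by
          refine Finset.sum_congr rfl fun j hj => ?_
          have hjp : j ≤ p := Nat.lt_succ_iff.1 (Finset.mem_range.1 hj)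
          by_cases hjm : j ≤ m
          · rw [if_pos ⟨hjp, hjm⟩]
            have hfac : (p.choose j : ℝ) * (j.factorial : ℝ) * ((p-j).factorial : ℝ)
                = (p.factorial : ℝ) := by
              exact_mod_cast Nat.choose_mul_factorial_mul_factorial hjp
            have h1' : (j.factorial : ℝ) ≠ 0 := Nat.cast_ne_zero.2 (Nat.factorial_ne_zero j)
            have h2' : ((p-j).factorial : ℝ) ≠ 0 := Nat.cast_ne_zero.2 (Nat.factorial_ne_zero _)
            have h3' : (p.factorial : ℝ) ≠ 0 := Nat.cast_ne_zero.2 (Nat.factorial_ne_zero p)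
            field_simp
            rw [← hfac]; ring
          · rw [if_neg (by tauto)]
            have hc0 : (n+m-j).choose n = 0 := Nat.choose_eq_zero_of_lt (by omega)
            rw [hc0]
            simp
  rw [key, hcombo]
  by_cases hpn : p ≤ n
  · rw [if_pos hpn]
    have e1 : n + m - p = (n-p) + m := by omega
    have e2 : ((n-p)+m).choose m = ((n-p)+m).choose (n-p) := by
      rw [show ((n-p)+m).choose (n-p) = ((n-p)+m).choose (((n-p)+m) - m) by congr 1; omega,
        Nat.choose_symm (by omega)]
    rw [e1, e2]
    ring
  · rw [if_neg hpn]
    have : (n+m-p).choose m = 0 := Nat.choose_eq_zero_of_lt (by omega)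
    rw [this]
    simp

lemma star (n m : ℕ) (c : ℕ → ℝ) (u : ℝ) :
    ∑ j ∈ range (n+1), (((n-j)+m).choose (n-j) : ℝ) * (u^j / (j.factorial : ℝ)) * c j
    = ∑ j ∈ range (m+1), ((n+(m-j)).choose n : ℝ) * ((-u)^j / (j.factorial : ℝ)) *
        (∑ i ∈ range (n+m-j+1), c (j+i) * u^i / (i.factorial : ℝ)) := by
  have hIco : ∀ j : ℕ, Finset.filter (fun p => j ≤ p) (Finset.range (n+m+1))
      = Finset.Ico j (n+m+1) := by
    intro j; ext p; simp only [Finset.mem_filter, Finset.mem_Ico, Finset.mem_range]; omega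
  have hRHS : ∑ j ∈ range (m+1), ((n+(m-j)).choose n : ℝ) * ((-u)^j / (j.factorial : ℝ)) *
        (∑ i ∈ range (n+m-j+1), c (j+i) * u^i / (i.factorial : ℝ))
      = ∑ p ∈ range (n+m+1), ∑ j ∈ range (m+1),
        (if j ≤ p then ((n+(m-j)).choose n : ℝ) * ((-u)^j / (j.factorial : ℝ)) *
          (c p * u^(p-j) / ((p-j).factorial : ℝ)) else 0) := by
    rw [Finset.sum_comm]
    refine Finset.sum_congr rfl fun j hj => ?_
    have hjm : j ≤ m := Nat.lt_succ_iff.1 (Finset.mem_range.1 hj)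
    rw [← Finset.sum_filter, hIco j, Finset.sum_Ico_eq_sum_range]
    have hlen : n + m + 1 - j = n + m - j + 1 := by omega
    rw [hlen, Finset.mul_sum]
    refine Finset.sum_congr rfl fun i _ => ?_
    have : j + i - j = i := by omega
    rw [this]
  rw [hRHS]
  have hinner : ∀ p ∈ range (n+m+1), ∑ j ∈ range (m+1),
        (if j ≤ p then ((n+(m-j)).choose n : ℝ) * ((-u)^j / (j.factorial : ℝ)) *
          (c p * u^(p-j) / ((p-j).factorial : ℝ)) else 0)
      = (if p ≤ n then (((n-p)+m).choose (n-p) : ℝ) / (p.factorial : ℝ) else 0) * (c p * u^p) := by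
    intro p hp
    have hpnm : p ≤ n + m := Nat.lt_succ_iff.1 (Finset.mem_range.1 hp)
    rw [← coef n m p hpnm, Finset.sum_mul]
    refine Finset.sum_congr rfl fun j _ => ?_
    by_cases h : j ≤ p
    · rw [if_pos h, if_pos h]
      have hu : u^j * u^(p-j) = u^p := by rw [← pow_add]; congr 1; omega
      have hneg : (-u)^j = (-1:ℝ)^j * u^j := by rw [neg_pow]
      rw [hneg, ← hu]
      ring
    · rw [if_neg h, if_neg h, zero_mul]
  rw [Finset.sum_congr rfl hinner]
  rw [← Finset.sum_subset (Finset.range_subset_range.2 (show n+1 ≤ n+m+1 by omega))]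
  · refine Finset.sum_congr rfl fun p hp => ?_
    have hpn : p ≤ n := Nat.lt_succ_iff.1 (Finset.mem_range.1 hp)
    rw [if_pos hpn]
    ring
  · intro p _ hp
    have : ¬ p ≤ n := by simp at hp ⊢; omega
    rw [if_neg this, zero_mul]


lemma iter_iter : ∀ (i j : ℕ) (x : ℝ → ℝ),
    iteratedDeriv i (iteratedDeriv j x) = iteratedDeriv (j+i) x := by
  intro i
  induction i with
  | zero => intro j x; simp [iteratedDeriv_zero]
  | succ i ih =>
    intro j x
    rw [iteratedDeriv_succ, ih, ← iteratedDeriv_succ]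
    congr 1

lemma aux_iter : ∀ (j : ℕ) (K : ℕ) (x : ℝ → ℝ) (U : Set ℝ), IsOpen U →
    ContDiffOn ℝ ((j + K : ℕ) : ℕ∞) x U → ContDiffOn ℝ ((K : ℕ) : ℕ∞) (iteratedDeriv j x) U := by
  intro j
  induction j with
  | zero => intro K x U hU h; simpa [iteratedDeriv_zero] using h
  | succ j ih =>
    intro K x U hU h
    rw [iteratedDeriv_succ']
    apply ih K (deriv x) U hU
    apply h.deriv_of_isOpen hU
    exact_mod_cast (by omega : j + K + 1 ≤ j + 1 + K)

/-- Local error of the Hermite–Obreschkoff formula: if `x` is `(n+m+1)`-times continuously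
differentiable on a neighbourhood of `t_k` and `τ ∈ [0,1]`, then the defect
`D(h) = Σ_{j=0}^{n} A_{n-j}^{m} ((τh)^j / j!) x^{(j)}(t_k)
       - Σ_{j=0}^{m} A_{n}^{m-j} ((-τh)^j / j!) x^{(j)}(t_k + τh)`
is `O(h^{n+m+1})` as `h → 0`. -/
theorem hermite_obreschkoff_local_error (n m : ℕ) (τ : ℝ) (hτ : τ ∈ Set.Icc (0 : ℝ) 1)
    (tk : ℝ) (x : ℝ → ℝ)
    (hx : ∀ᶠ t in nhds tk, ContDiffAt ℝ ((n + m + 1 : ℕ) : ℕ∞) x t) :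
    (fun h : ℝ =>
        (∑ j ∈ Finset.range (n + 1),
            (((n - j) + m).choose (n - j) : ℝ) * ((τ * h) ^ j / (j.factorial : ℝ)) *
              iteratedDeriv j x tk)
        - ∑ j ∈ Finset.range (m + 1),
            ((n + (m - j)).choose n : ℝ) * ((-(τ * h)) ^ j / (j.factorial : ℝ)) *
              iteratedDeriv j x (tk + τ * h))
      =O[nhds (0 : ℝ)] fun h : ℝ => h ^ (n + m + 1) := by
  have h0 : ContDiffAt ℝ ((n+m+1 : ℕ) : ℕ∞) x tk := hx.self_of_nhds
  obtain ⟨u, hu_nhds, hu⟩ := h0.contDiffOn le_rfl (by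
    intro h
    exfalso
    have h2 : ((n+m+1 : ℕ) : ℕ∞) = ⊤ := WithTop.coe_inj.1 h
    exact ENat.coe_ne_top _ h2)
  have hU : IsOpen (interior u) := isOpen_interior
  have htk : tk ∈ interior u := mem_interior_iff_mem_nhds.2 hu_nhds
  have hX : ContDiffOn ℝ ((n+m+1 : ℕ) : ℕ∞) x (interior u) := hu.mono interior_subset
  have hτ1 : |τ| ≤ 1 := by rw [abs_of_nonneg hτ.1]; exact hτ.2
  have htend : Tendsto (fun h : ℝ => τ * h) (nhds 0) (nhds 0) := by
    have hcont : Continuous (fun h : ℝ => τ * h) := continuous_const.mul continuous_id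
    simpa using hcont.tendsto 0
  have hterm : ∀ j ∈ range (m+1),
      (fun h : ℝ => ((n + (m - j)).choose n : ℝ) * ((-(τ * h)) ^ j / (j.factorial : ℝ)) *
        (iteratedDeriv j x (tk + τ * h)
          - ∑ i ∈ range (n+m-j+1), iteratedDeriv (j+i) x tk * (τ*h)^i / (i.factorial : ℝ)))
      =O[nhds (0:ℝ)] (fun h : ℝ => h ^ (n+m+1)) := by
    intro j hj
    have hjm : j ≤ m := Nat.lt_succ_iff.1 (Finset.mem_range.1 hj)
    have hcd : ContDiffOn ℝ (((n+m-j)+1 : ℕ) : ℕ∞) (iteratedDeriv j x) (interior u) := by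
      apply aux_iter j ((n+m-j)+1) x (interior u) hU
      have e : j + ((n+m-j)+1) = n+m+1 := by omega
      rw [e]; exact hX
    have hT := taylor_bigO (n+m-j) (iteratedDeriv j x) (interior u) hU tk htk hcd
    have hT2 := hT.comp_tendsto htend
    simp only [Function.comp_def, iter_iter] at hT2
    have hpow1 : (fun h : ℝ => (τ*h)^(n+m-j+1)) =O[nhds (0:ℝ)] fun h : ℝ => h^(n+m-j+1) := by
      apply Asymptotics.isBigO_of_le
      intro h
      rw [norm_pow, norm_pow]
      apply pow_le_pow_left₀ (norm_nonneg _)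
      rw [norm_mul]
      calc ‖τ‖ * ‖h‖ ≤ 1 * ‖h‖ := mul_le_mul_of_nonneg_right hτ1 (norm_nonneg _)
        _ = ‖h‖ := one_mul _
    have hρ := hT2.trans hpow1
    have hfac : (fun h : ℝ => ((n + (m - j)).choose n : ℝ) * ((-(τ * h)) ^ j / (j.factorial:ℝ)))
        =O[nhds (0:ℝ)] fun h : ℝ => h ^ j := by
      apply Asymptotics.isBigO_of_le' (c := ((n + (m - j)).choose n : ℝ) / (j.factorial : ℝ))
      intro h
      rw [norm_mul, norm_div, norm_pow, norm_pow, norm_neg, norm_mul]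
      have h1 : ‖((n + (m - j)).choose n : ℝ)‖ = ((n + (m - j)).choose n : ℝ) := by
        rw [Real.norm_eq_abs, abs_of_nonneg (by positivity)]
      have h2 : ‖(j.factorial : ℝ)‖ = (j.factorial : ℝ) := by
        rw [Real.norm_eq_abs, abs_of_nonneg (by positivity)]
      rw [h1, h2]
      have h3 : (‖τ‖ * ‖h‖) ^ j ≤ ‖h‖ ^ j := by
        apply pow_le_pow_left₀ (by positivity)
        calc ‖τ‖ * ‖h‖ ≤ 1 * ‖h‖ := mul_le_mul_of_nonneg_right hτ1 (norm_nonneg _)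
          _ = ‖h‖ := one_mul _
      have hrhs : ((n + (m - j)).choose n : ℝ) / (j.factorial:ℝ) * ‖h‖ ^ j
          = ((n + (m - j)).choose n : ℝ) * (‖h‖^j / (j.factorial:ℝ)) := by ring
      rw [hrhs]
      gcongr
    have hmul := hfac.mul hρ
    have heqf : (fun h : ℝ => h^j * h^(n+m-j+1)) = fun h : ℝ => h^(n+m+1) := by
      funext h
      rw [← pow_add]
      congr 1
      omega
    rwa [heqf] at hmul
  have hfun : (fun h : ℝ =>
        (∑ j ∈ Finset.range (n + 1),
            (((n - j) + m).choose (n - j) : ℝ) * ((τ * h) ^ j / (j.factorial : ℝ)) *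
              iteratedDeriv j x tk)
        - ∑ j ∈ Finset.range (m + 1),
            ((n + (m - j)).choose n : ℝ) * ((-(τ * h)) ^ j / (j.factorial : ℝ)) *
              iteratedDeriv j x (tk + τ * h))
      = fun h : ℝ =>
        -(∑ j ∈ range (m+1), ((n + (m - j)).choose n : ℝ) * ((-(τ * h)) ^ j / (j.factorial : ℝ)) *
          (iteratedDeriv j x (tk + τ * h)
            - ∑ i ∈ range (n+m-j+1), iteratedDeriv (j+i) x tk * (τ*h)^i / (i.factorial : ℝ))) := by
    funext h
    have hstar := star n m (fun p => iteratedDeriv p x tk) (τ*h)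
    beta_reduce at hstar
    rw [hstar]
    simp only [mul_sub, Finset.sum_sub_distrib, neg_sub]
  rw [hfun]
  exact (Asymptotics.IsBigO.fun_sum hterm).neg_left
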